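/- Consider the primal-dual averaging conditional gradient method: θ_k > 0 with θ_k/Θ_k = γ_k := 2/(k+1), Θ_k := Σ_{i=1}^k θ_i; x₀ = y₀ ∈ X; for k ≥ 1, z_{k−1} := ((k−1)/(k+1)) y_{k−1} + (2/(k+1)) x_{k−1}, p_k := Θ_k^{-1} Σ_{i=1}^k θ_i f'(z_{i−1}), x_k ∈ argmin_{x∈X} p_k(x), and y_k ∈ X with f(y_k) ≤ f((1−γ_k) y_{k−1} + γ_k x_k). Let x* be a minimizer of f over X and set G := ‖f'(x*)‖_* + L D_X. Then: (i) ‖p_k − p_{k−1}‖_* ≤ 2 γ_k G for all k ≥ 2; and (ii) if moreover the linear optimization oracle satisfies ‖x_k − x_{k−1}‖ ≤ Q ‖p_k − p_{k−1}‖_*^ρ for all k ≥ 2, for some ρ ∈ (0,1] and Q > 0, then there is an absolute constant C > 0 such that for every k ≥ 1, f(y_k) − f(x*) ≤ C ( L D_X²/k² + L Q² G^{2ρ} · S_ρ(k)/k² ), where S_ρ(k) := k^{1−2ρ}/(1−2ρ) if ρ ∈ (0, 1/2), S_ρ(k) := log(k+1) if ρ = 1/2, and S_ρ(k) := 1/(2ρ−1)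 if ρ ∈ (1/2, 1]. -/

import Mathlib

open Filter Topology

lemma my_grad_ineq {E : Type} [NormedAddCommGroup E] [NormedSpace ℝ E]
    {X : Set E} {f : E → ℝ} {f' : E → E →L[ℝ] ℝ}
    (hconv : ConvexOn ℝ X f) (hdiff : ∀ a ∈ X, HasFDerivAt f (f' a) a) :
    ∀ a ∈ X, ∀ b ∈ X, f a + f' a (b - a) ≤ f b := by
  intro a ha b hb
  have hline : HasDerivAt (fun t : ℝ => a + t • (b - a)) (b - a) 0 := by
    simpa using ((hasDerivAt_id (0:ℝ)).smul_const (b - a)).const_add a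
  have h0 : HasFDerivAt f (f' a) ((fun t : ℝ => a + t • (b - a)) 0) := by
    simpa using hdiff a ha
  have hg : HasDerivAt (fun t : ℝ => f (a + t • (b - a))) (f' a (b - a)) 0 := by
    simpa [Function.comp_def] using h0.comp_hasDerivAt (x := (0:ℝ)) hline
  have hslope : Tendsto (slope (fun t : ℝ => f (a + t • (b - a))) 0) (𝓝[>] 0)
      (𝓝 (f' a (b - a))) :=
    (hasDerivAt_iff_tendsto_slope.mp hg).mono_left
      (nhdsWithin_mono 0 (fun t ht => ne_of_gt ht))
  have hev : ∀ᶠ t in 𝓝[>] (0:ℝ), slope (fun t : ℝ => f (a + t • (b - a))) 0 t ≤ f b - f a := by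
    filter_upwards [Ioo_mem_nhdsGT_of_mem (Set.mem_Ico.mpr ⟨le_refl (0:ℝ), one_pos⟩)]
      with t ht
    have ht0 : 0 < t := ht.1
    have hcomb : f ((1 - t) • a + t • b) ≤ (1 - t) * f a + t * f b :=
      hconv.2 ha hb (by linarith [ht.2]) ht0.le (by ring)
    have heq : a + t • (b - a) = (1 - t) • a + t • b := by module
    rw [slope_def_field, sub_zero, div_le_iff₀ ht0]
    have heq0 : a + (0:ℝ) • (b - a) = a := by module
    rw [heq, heq0]
    nlinarith [hcomb]
  have := le_of_tendsto hslope hev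
  linarith

lemma my_rpow_anti {a b s : ℝ} (ha : 0 < a) (hab : a ≤ b) (hs : 0 ≤ s) :
    b ^ (-s) ≤ a ^ (-s) := by
  rw [Real.rpow_neg (by linarith), Real.rpow_neg ha.le]
  exact inv_anti₀ (Real.rpow_pos_of_pos ha s) (Real.rpow_le_rpow ha.le hab hs)

lemma my_Icc_insert_top (a k : ℕ) (h : a ≤ k + 1) :
    Finset.Icc a (k+1) = insert (k+1) (Finset.Icc a k) := by
  ext i; simp only [Finset.mem_Icc, Finset.mem_insert]; omega

lemma my_sum_bound (ρ : ℝ) (hρ1 : 0 < ρ) (hρ2 : ρ ≤ 1) (k : ℕ) (hk : 1 ≤ k) :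
    ∑ i ∈ Finset.Icc 1 k, ((i:ℝ)) ^ (-(2*ρ)) ≤
      3 * (if ρ < 1/2 then (k:ℝ) ^ (1-2*ρ) / (1-2*ρ)
           else if ρ = 1/2 then Real.log ((k:ℝ)+1)
           else 1/(2*ρ-1)) := by
  have hs0 : 0 < 2*ρ := by positivity
  have hs2 : 2*ρ ≤ 2 := by linarith
  have hkR : (1:ℝ) ≤ (k:ℝ) := by exact_mod_cast hk
  have hkpos : (0:ℝ) < (k:ℝ) := by linarith
  have hsplit : ∑ i ∈ Finset.Icc 1 k, ((i:ℝ)) ^ (-(2*ρ))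
      = 1 + ∑ i ∈ Finset.Icc 2 k, ((i:ℝ)) ^ (-(2*ρ)) := by
    have h1 : Finset.Icc 1 k = insert 1 (Finset.Icc 2 k) := by
      ext i; simp only [Finset.mem_Icc, Finset.mem_insert]; omega
    rw [h1, Finset.sum_insert (by simp)]
    norm_num
  have hanti : AntitoneOn (fun x : ℝ => x ^ (-(2*ρ))) (Set.Icc ((1:ℕ):ℝ) ((k:ℕ):ℝ)) := by
    intro u hu v hv huv
    exact my_rpow_anti (by simpa using lt_of_lt_of_le one_pos (by exact_mod_cast hu.1)) huv hs0.le
  have hint : ∑ i ∈ Finset.Icc 2 k, ((i:ℝ)) ^ (-(2*ρ)) ≤ ∫ t in (1:ℝ)..(k:ℝ), t ^ (-(2*ρ)) := by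
    have h2 := AntitoneOn.sum_le_integral_Ico (f := fun x : ℝ => x ^ (-(2*ρ))) (a := 1) (b := k)
      hk hanti
    have hre : ∑ i ∈ Finset.Ico 1 k, (((i + 1 : ℕ)):ℝ) ^ (-(2*ρ))
        = ∑ i ∈ Finset.Icc 2 k, ((i:ℝ)) ^ (-(2*ρ)) := by
      rw [Finset.sum_Ico_add' (fun i : ℕ => ((i:ℕ):ℝ) ^ (-(2*ρ))) 1 k 1, Finset.Ico_add_one_right_eq_Icc]
    rw [← hre]
    simpa using h2
  rcases lt_trichotomy ρ (1/2 : ℝ) with hc | hc | hc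
  · -- ρ < 1/2
    rw [if_pos hc]
    have h1s : 0 < 1 - 2*ρ := by linarith
    have hI : (∫ t in (1:ℝ)..(k:ℝ), t ^ (-(2*ρ)))
        = ((k:ℝ) ^ (1 - 2*ρ) - 1) / (1 - 2*ρ) := by
      rw [integral_rpow (Or.inl (by linarith))]
      rw [Real.one_rpow, show -(2*ρ)+1 = 1-2*ρ by ring]
    have hone : (1:ℝ) ≤ (k:ℝ) ^ (1 - 2*ρ) := Real.one_le_rpow hkR (by linarith)
    have hSpos : (0:ℝ) < (k:ℝ) ^ (1 - 2*ρ) / (1 - 2*ρ) := by positivity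
    have h1leS : (1:ℝ) ≤ (k:ℝ) ^ (1 - 2*ρ) / (1 - 2*ρ) := by
      rw [le_div_iff₀ h1s]; nlinarith
    have : (∫ t in (1:ℝ)..(k:ℝ), t ^ (-(2*ρ))) ≤ (k:ℝ) ^ (1 - 2*ρ) / (1 - 2*ρ) := by
      rw [hI]
      gcongr
      linarith
    linarith [hsplit, hint]
  · -- ρ = 1/2
    rw [if_neg (by rw [hc]; norm_num), if_pos hc]
    have hI : (∫ t in (1:ℝ)..(k:ℝ), t ^ (-(2*ρ))) = Real.log (k:ℝ) := by
      have : (fun t : ℝ => t ^ (-(2*ρ))) = fun t : ℝ => t⁻¹ := by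
        funext t; rw [hc]; norm_num [Real.rpow_neg_one]
      rw [this, integral_inv (by rw [Set.uIcc_of_le hkR]; intro h; exact absurd h.1 (by norm_num))]
      norm_num
    have hlog2 : (0.6931471803 : ℝ) < Real.log 2 := Real.log_two_gt_d9
    have hlogmono : Real.log 2 ≤ Real.log ((k:ℝ)+1) :=
      Real.log_le_log (by norm_num) (by linarith)
    have hlogk : Real.log (k:ℝ) ≤ Real.log ((k:ℝ)+1) :=
      Real.log_le_log hkpos (by linarith)
    linarith [hsplit, hint, hI]
  · -- ρ > 1/2
    rw [if_neg (by linarith), if_neg (by intro h; rw [h] at hc; norm_num at hc)]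
    have h1s : 0 < 2*ρ - 1 := by linarith
    have hI : (∫ t in (1:ℝ)..(k:ℝ), t ^ (-(2*ρ)))
        = ((k:ℝ) ^ (1 - 2*ρ) - 1) / (1 - 2*ρ) := by
      rw [integral_rpow (Or.inr ⟨by intro h; rw [neg_eq_iff_eq_neg] at h; nlinarith,
        by rw [Set.uIcc_of_le hkR]; intro h; exact absurd h.1 (by norm_num)⟩)]
      rw [Real.one_rpow, show -(2*ρ)+1 = 1-2*ρ by ring]
    have hnn : (0:ℝ) ≤ (k:ℝ) ^ (1 - 2*ρ) := Real.rpow_nonneg hkpos.le _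
    have hIle : (∫ t in (1:ℝ)..(k:ℝ), t ^ (-(2*ρ))) ≤ 1/(2*ρ-1) := by
      rw [hI, show ((k:ℝ) ^ (1 - 2*ρ) - 1) / (1 - 2*ρ) = (1 - (k:ℝ) ^ (1 - 2*ρ)) / (2*ρ-1) by
        rw [div_eq_div_iff (by linarith) (by linarith)]; ring]
      gcongr
      linarith
    have h2s : (1:ℝ) ≤ 2/(2*ρ-1) := by rw [le_div_iff₀ h1s]; linarith
    have : 3 * (1/(2*ρ-1)) = 1/(2*ρ-1) + 2/(2*ρ-1) := by ring
    linarith [hsplit, hint, hIle]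

set_option maxHeartbeats 4000000 in
/-- For the PDA-CndG method with `p_k = Θ_k^{-1} ∑_{i=1}^k θ_i f'(z_{i−1})`
and `G = ‖f'(x*)‖_* + L D_X`: (i) `‖p_k − p_{k−1}‖_* ≤ 2 γ_k G` for all `k ≥ 2`; and
(ii) there is an absolute constant `C > 0` such that, if moreover the oracle is Hölder
continuous, `‖x_k − x_{k−1}‖ ≤ Q ‖p_k − p_{k−1}‖_*^ρ` for `k ≥ 2` (`ρ ∈ (0,1]`, `Q > 0`),
then `f(y_k) − f(x*) ≤ C (L D_X²/k² + L Q² G^{2ρ} S_ρ(k)/k²)` for all `k ≥ 1`, where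
`S_ρ(k) = k^{1−2ρ}/(1−2ρ)` if `ρ < 1/2`, `S_ρ(k) = log(k+1)` if `ρ = 1/2`, and
`S_ρ(k) = 1/(2ρ−1)` if `ρ > 1/2`. -/
theorem stmt19 : ∃ C : ℝ, 0 < C ∧
    ∀ (E : Type) [NormedAddCommGroup E] [NormedSpace ℝ E] [FiniteDimensional ℝ E]
      (X : Set E), IsCompact X → Convex ℝ X → X.Nonempty →
    ∀ (DX : ℝ), IsGreatest {d : ℝ | ∃ a ∈ X, ∃ b ∈ X, d = ‖a - b‖} DX →
    ∀ (f : E → ℝ) (f' : E → E →L[ℝ] ℝ) (L : ℝ), 0 < L →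
      ConvexOn ℝ X f →
      (∀ a ∈ X, HasFDerivAt f (f' a) a) →
      (∀ a ∈ X, ∀ b ∈ X, f b ≤ f a + f' a (b - a) + L / 2 * ‖b - a‖ ^ 2) →
      (∀ a ∈ X, ∀ b ∈ X, ‖f' a - f' b‖ ≤ L * ‖a - b‖) →
    ∀ (θ Θ : ℕ → ℝ), (∀ k ≥ 1, 0 < θ k) →
      (∀ k : ℕ, Θ k = ∑ i ∈ Finset.Icc 1 k, θ i) →
    ∀ (γ : ℕ → ℝ), (∀ k : ℕ, γ k = 2 / (k + 1)) →
      (∀ k ≥ 1, θ k / Θ k = γ k) →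
    ∀ (x y z : ℕ → E) (p : ℕ → E →L[ℝ] ℝ),
      x 0 ∈ X → y 0 = x 0 →
      (∀ k ≥ 1, z (k - 1) =
        (((k : ℝ) - 1) / ((k : ℝ) + 1)) • y (k - 1) + (2 / ((k : ℝ) + 1)) • x (k - 1)) →
      (∀ k ≥ 1, p k = (Θ k)⁻¹ • ∑ i ∈ Finset.Icc 1 k, θ i • f' (z (i - 1))) →
      (∀ k ≥ 1, x k ∈ X ∧ ∀ v ∈ X, p k (x k) ≤ p k v) →
      (∀ k ≥ 1, y k ∈ X ∧ f (y k) ≤ f ((1 - γ k) • y (k - 1) + γ k • x k)) →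
    ∀ (xstar : E), xstar ∈ X → (∀ v ∈ X, f xstar ≤ f v) →
      (∀ k ≥ 2, ‖p k - p (k - 1)‖ ≤ 2 * γ k * (‖f' xstar‖ + L * DX)) ∧
      (∀ (ρ Q : ℝ), ρ ∈ Set.Ioc (0 : ℝ) 1 → 0 < Q →
        (∀ k ≥ 2, ‖x k - x (k - 1)‖ ≤ Q * ‖p k - p (k - 1)‖ ^ ρ) →
        ∀ k ≥ 1,
          f (y k) - f xstar ≤ C * (L * DX ^ 2 / (k : ℝ) ^ 2 +
            L * Q ^ 2 * (‖f' xstar‖ + L * DX) ^ (2 * ρ) *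
              (if ρ < 1 / 2 then (k : ℝ) ^ (1 - 2 * ρ) / (1 - 2 * ρ)
               else if ρ = 1 / 2 then Real.log ((k : ℝ) + 1)
               else 1 / (2 * ρ - 1)) / (k : ℝ) ^ 2)) := by
  refine ⟨100, by norm_num, ?_⟩
  intro E _ _ _ X hXcomp hXconv hXne DX hDX f f' L hL hfconv hfderiv hsmooth hlip θ Θ hθpos hΘ
    γ hγ hratio x y z p hx0 hy0 hz hp hx hy xstar hxstarX hxstarmin
  set G : ℝ := ‖f' xstar‖ + L * DX with hGdef
  -- basic facts
  have hdist : ∀ a ∈ X, ∀ b ∈ X, ‖a - b‖ ≤ DX := fun a ha b hb => hDX.2 ⟨a, ha, b, hb, rfl⟩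
  have hDX0 : (0:ℝ) ≤ DX := by
    have := hdist (x 0) hx0 (x 0) hx0; simpa using this.trans_eq' (by simp)
  have hG0 : (0:ℝ) ≤ G := add_nonneg (norm_nonneg _) (mul_nonneg hL.le hDX0)
  have hgradG : ∀ a ∈ X, ‖f' a‖ ≤ G := by
    intro a ha
    calc ‖f' a‖ = ‖f' xstar + (f' a - f' xstar)‖ := by rw [add_sub_cancel]
      _ ≤ ‖f' xstar‖ + ‖f' a - f' xstar‖ := norm_add_le _ _
      _ ≤ ‖f' xstar‖ + L * ‖a - xstar‖ := by linarith [hlip a ha xstar hxstarX]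
      _ ≤ G := by have := hdist a ha xstar hxstarX; rw [hGdef]; nlinarith
  have hXmem : ∀ j : ℕ, x j ∈ X := by
    intro j; rcases j with _ | j
    · exact hx0
    · exact (hx (j+1) (by omega)).1
  have hYmem : ∀ j : ℕ, y j ∈ X := by
    intro j; rcases j with _ | j
    · rw [hy0]; exact hx0
    · exact (hy (j+1) (by omega)).1
  have hγval : ∀ j : ℕ, γ (j+1) = 2 / ((j:ℝ) + 2) := by
    intro j; rw [hγ]; push_cast; ring_nf
  have hγpos : ∀ j : ℕ, 0 < γ (j+1) := by
    intro j; rw [hγval]; positivity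
  have hγle1 : ∀ j : ℕ, γ (j+1) ≤ 1 := by
    intro j; rw [hγval]
    rw [div_le_one (by positivity)]
    have : (0:ℝ) ≤ (j:ℝ) := Nat.cast_nonneg j
    linarith
  have hzj : ∀ j : ℕ, z j = (1 - γ (j+1)) • y j + γ (j+1) • x j := by
    intro j
    have h := hz (j+1) (by omega)
    simp only [Nat.add_sub_cancel] at h
    rw [h, hγval]
    push_cast
    have h2 : ((j:ℝ) + 2) ≠ 0 := by positivity
    rw [show (j:ℝ)+1+1 = (j:ℝ)+2 by ring]
    congr 2
    field_simp
    ring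
  have hzX : ∀ j : ℕ, z j ∈ X := by
    intro j
    rw [hzj]
    exact hXconv (hYmem j) (hXmem j) (by linarith [hγle1 j]) (hγpos j).le (by ring)
  -- Θ, θ facts
  have hΘpos : ∀ k, 1 ≤ k → 0 < Θ k := by
    intro k hk
    rw [hΘ]
    apply Finset.sum_pos
    · intro i hi; exact hθpos i (Finset.mem_Icc.mp hi).1
    · exact ⟨1, Finset.mem_Icc.mpr ⟨le_refl 1, hk⟩⟩
  have hθ1 : 0 < θ 1 := hθpos 1 le_rfl
  have hθeq : ∀ k, 1 ≤ k → θ k = γ k * Θ k := by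
    intro k hk
    have h := hratio k hk
    field_simp [(hΘpos k hk).ne'] at h
    linarith [h]
  have hΘrec : ∀ k, 1 ≤ k → Θ (k+1) = Θ k + θ (k+1) := by
    intro k hk
    rw [hΘ, hΘ, my_Icc_insert_top 1 k (by omega), Finset.sum_insert (by simp)]
    ring
  have hΘformula : ∀ k, 1 ≤ k → Θ k = θ 1 * k * ((k:ℝ)+1) / 2 := by
    intro k hk
    induction k, hk using Nat.le_induction with
    | base => rw [hΘ]; simp; ring
    | succ k hk ih =>
      have h1 := hΘrec k hk
      have h2 := hθeq (k+1) (by omega)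
      rw [hγval k] at h2
      have hk0 : (0:ℝ) < (k:ℝ) := by exact_mod_cast hk
      have hk2 : ((k:ℝ) + 2) ≠ 0 := by positivity
      rw [ih] at h1
      push_cast
      push_cast at h1 h2
      field_simp at h2
      -- h2 : θ (k+1) * (k+2) = 2 * Θ (k+1)
      nlinarith [h1, h2]
  have hθformula : ∀ k, 1 ≤ k → θ k = θ 1 * k := by
    intro k hk
    have hk1 : ((k:ℝ)+1) ≠ 0 := by positivity
    rw [hθeq k hk, hΘformula k hk, hγ]
    field_simp
  have hqmin : ∀ k, 1 ≤ k → ∀ v ∈ X,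
      (∑ i ∈ Finset.Icc 1 k, θ i * f' (z (i - 1)) (x k))
        ≤ ∑ i ∈ Finset.Icc 1 k, θ i * f' (z (i - 1)) v := by
    intro k hk v hv
    have h := (hx k hk).2 v hv
    rw [hp k hk] at h
    simp only [ContinuousLinearMap.smul_apply, ContinuousLinearMap.sum_apply,
      ContinuousLinearMap.coe_smul', Pi.smul_apply, smul_eq_mul] at h
    exact le_of_mul_le_mul_left h (inv_pos.mpr (hΘpos k hk))
  have hqnorm : ∀ k, 1 ≤ k → ‖∑ i ∈ Finset.Icc 1 k, θ i • f' (z (i - 1))‖ ≤ Θ k * G := by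
    intro k hk
    calc ‖∑ i ∈ Finset.Icc 1 k, θ i • f' (z (i - 1))‖
        ≤ ∑ i ∈ Finset.Icc 1 k, ‖θ i • f' (z (i - 1))‖ := norm_sum_le _ _
      _ ≤ ∑ i ∈ Finset.Icc 1 k, θ i * G := by
          apply Finset.sum_le_sum
          intro i hi
          have hθi := hθpos i (Finset.mem_Icc.mp hi).1
          have hns := norm_smul (θ i) (f' (z (i - 1)))
          rw [Real.norm_eq_abs, abs_of_pos hθi] at hns
          rw [hns]
          exact mul_le_mul_of_nonneg_left (hgradG _ (hzX _)) hθi.le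
      _ = Θ k * G := by rw [hΘ, Finset.sum_mul]
  have hpnorm : ∀ k, 1 ≤ k → ‖p k‖ ≤ G := by
    intro k hk
    rw [hp k hk]
    have hΘk := hΘpos k hk
    have hns := norm_smul ((Θ k)⁻¹) (∑ i ∈ Finset.Icc 1 k, θ i • f' (z (i - 1)))
    rw [Real.norm_eq_abs, abs_of_pos (inv_pos.mpr hΘk)] at hns
    rw [hns]
    calc (Θ k)⁻¹ * ‖∑ i ∈ Finset.Icc 1 k, θ i • f' (z (i - 1))‖ ≤ (Θ k)⁻¹ * (Θ k * G) :=
          mul_le_mul_of_nonneg_left (hqnorm k hk) (inv_pos.mpr hΘk).le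
      _ = G := by field_simp
  have hqsucc : ∀ j : ℕ, (∑ i ∈ Finset.Icc 1 (j+1), θ i • f' (z (i - 1)))
      = (∑ i ∈ Finset.Icc 1 j, θ i • f' (z (i - 1))) + θ (j+1) • f' (z j) := by
    intro j
    rw [my_Icc_insert_top 1 j (by omega), Finset.sum_insert (by simp)]
    simp only [Nat.add_sub_cancel]
    abel
  have hpdiff : ∀ j, 1 ≤ j → p (j+1) - p j = γ (j+1) • (f' (z j) - p j) := by
    intro j hj
    have hΘ1 := hΘpos (j+1) (by omega)
    have hΘ0 := hΘpos j hj
    have hqe : (∑ i ∈ Finset.Icc 1 j, θ i • f' (z (i - 1))) = Θ j • p j := by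
      rw [hp j hj, smul_smul, mul_inv_cancel₀ hΘ0.ne', one_smul]
    have hθs : θ (j+1) = γ (j+1) * Θ (j+1) := hθeq (j+1) (by omega)
    have hΘs : Θ j = (1 - γ (j+1)) * Θ (j+1) := by
      have := hΘrec j hj
      nlinarith [hθs]
    rw [hp (j+1) (by omega), hqsucc j, hqe, hΘs, hθs]
    rw [smul_add, smul_smul, smul_smul]
    rw [mul_comm ((Θ (j+1))⁻¹) ((1 - γ (j+1)) * Θ (j+1)),
        mul_comm ((Θ (j+1))⁻¹) (γ (j+1) * Θ (j+1))]
    rw [mul_assoc, mul_inv_cancel₀ hΘ1.ne', mul_one, mul_assoc, mul_inv_cancel₀ hΘ1.ne', mul_one]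
    module
  have parti : ∀ k, 2 ≤ k → ‖p k - p (k-1)‖ ≤ 2 * γ k * G := by
    intro k hk
    obtain ⟨j, rfl⟩ : ∃ j, k = j + 1 := ⟨k - 1, by omega⟩
    have hj : 1 ≤ j := by omega
    simp only [Nat.add_sub_cancel]
    have hns := norm_smul (γ (j+1)) (f' (z j) - p j)
    rw [Real.norm_eq_abs, abs_of_pos (hγpos j)] at hns
    rw [hpdiff j hj, hns]
    have h1 : ‖f' (z j) - p j‖ ≤ G + G := by
      calc ‖f' (z j) - p j‖ ≤ ‖f' (z j)‖ + ‖p j‖ := norm_sub_le _ _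
        _ ≤ G + G := add_le_add (hgradG _ (hzX j)) (hpnorm j hj)
    nlinarith [hγpos j, h1, norm_nonneg (f' (z j) - p j)]
  -- gradient inequality
  have hgrad := my_grad_ineq hfconv hfderiv
  have hsumrep : ∀ (k : ℕ) (v : E),
      (∑ i ∈ Finset.Icc 1 k, θ i * (f (z (i-1)) + f' (z (i-1)) (v - z (i-1))))
        = (∑ i ∈ Finset.Icc 1 k, θ i * (f (z (i-1)) - f' (z (i-1)) (z (i-1))))
          + ∑ i ∈ Finset.Icc 1 k, θ i * f' (z (i-1)) v := by
    intro k v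
    rw [← Finset.sum_add_distrib]
    apply Finset.sum_congr rfl
    intro i _
    rw [map_sub]
    ring
  -- Claim B
  have hB : ∀ k, 1 ≤ k →
      (∑ i ∈ Finset.Icc 1 k, θ i * (f (z (i-1)) + f' (z (i-1)) (x k - z (i-1))))
        ≤ Θ k * f xstar := by
    intro k hk
    have h1 : (∑ i ∈ Finset.Icc 1 k, θ i * (f (z (i-1)) + f' (z (i-1)) (x k - z (i-1))))
        ≤ ∑ i ∈ Finset.Icc 1 k, θ i * (f (z (i-1)) + f' (z (i-1)) (xstar - z (i-1))) := by
      rw [hsumrep k (x k), hsumrep k xstar]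
      exact add_le_add_right (hqmin k hk xstar hxstarX) _
    have h2 : ∑ i ∈ Finset.Icc 1 k, θ i * (f (z (i-1)) + f' (z (i-1)) (xstar - z (i-1)))
        ≤ ∑ i ∈ Finset.Icc 1 k, θ i * f xstar := by
      apply Finset.sum_le_sum
      intro i hi
      exact mul_le_mul_of_nonneg_left (hgrad _ (hzX _) xstar hxstarX)
        (hθpos i (Finset.mem_Icc.mp hi).1).le
    have h3 : ∑ i ∈ Finset.Icc 1 k, θ i * f xstar = Θ k * f xstar := by
      rw [hΘ, Finset.sum_mul]
    linarith
  -- Claim A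
  have hA : ∀ k, 1 ≤ k → Θ k * f (y k) ≤
      (∑ i ∈ Finset.Icc 1 k, θ i * (f (z (i-1)) + f' (z (i-1)) (x k - z (i-1))))
      + L/2 * ∑ i ∈ Finset.Icc 1 k, θ i * γ i * ‖x i - x (i-1)‖^2 := by
    intro k hk
    induction k, hk using Nat.le_induction with
    | base =>
      have hγ1 : γ 1 = 1 := by rw [hγ]; norm_num
      have hz0 : z 0 = x 0 := by
        have h := hzj 0
        rw [hγ1] at h
        norm_num at h
        exact h
      have hy1 := (hy 1 le_rfl).2
      rw [hγ1] at hy1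
      norm_num at hy1
      have hΘ1 : Θ 1 = θ 1 := by rw [hΘ]; simp
      have hsm := hsmooth (z 0) (hzX 0) (x 1) (hXmem 1)
      simp only [Finset.Icc_self, Finset.sum_singleton, Nat.sub_self]
      rw [hΘ1, hγ1, hz0]
      rw [hz0] at hsm
      nlinarith [mul_le_mul_of_nonneg_left (hy1.trans hsm) hθ1.le]
    | succ k hk ih =>
      have hk1 : (1:ℕ) ≤ k + 1 := by omega
      have hγk := hγpos k
      have h1γ : (0:ℝ) ≤ 1 - γ (k+1) := by linarith [hγle1 k]
      have hΘk1 := hΘpos (k+1) hk1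
      have hzk := hzj k
      set b : E := (1 - γ (k+1)) • y k + γ (k+1) • x (k+1) with hbdef
      have hbX : b ∈ X := hXconv (hYmem k) (hXmem (k+1)) h1γ (hγpos k).le (by ring)
      have hbz : b - z k = γ (k+1) • (x (k+1) - x k) := by rw [hbdef, hzk]; module
      have hym : f (y (k+1)) ≤ f b := by
        have h := (hy (k+1) (by omega)).2
        simpa only [Nat.add_sub_cancel] using h
      have hsm := hsmooth (z k) (hzX k) b hbX
      rw [hbz] at hsm
      have hnrm : ‖γ (k+1) • (x (k+1) - x k)‖ = γ (k+1) * ‖x (k+1) - x k‖ := by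
        have h := norm_smul (γ (k+1)) (x (k+1) - x k)
        rw [Real.norm_eq_abs, abs_of_pos (hγpos k)] at h
        exact h
      rw [hnrm, mul_pow] at hsm
      have happ : f' (z k) (γ (k+1) • (x (k+1) - x k))
          = γ (k+1) * f' (z k) (x (k+1) - x k) := by
        rw [map_smul]; rfl
      rw [happ] at hsm
      have hgy := hgrad (z k) (hzX k) (y k) (hYmem k)
      have hlin : (1 - γ (k+1)) * f' (z k) (y k - z k)
          + γ (k+1) * f' (z k) (x k - z k) = 0 := by
        have h0 : (1 - γ (k+1)) • (y k - z k) + γ (k+1) • (x k - z k) = (0:E) := by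
          rw [hzk]; module
        have h1 := congrArg (f' (z k)) h0
        simpa [map_add, map_smul, smul_eq_mul] using h1
      have hadd : f' (z k) (x k - z k) + f' (z k) (x (k+1) - x k)
          = f' (z k) (x (k+1) - z k) := by
        rw [← map_add]; congr 1; abel
      have hc1 : Θ (k+1) * (1 - γ (k+1)) = Θ k := by
        linear_combination hΘrec k hk + hθeq (k+1) hk1
      have hc2 : Θ (k+1) * γ (k+1) = θ (k+1) := by
        linear_combination (-1 : ℝ) * hθeq (k+1) hk1
      -- combined one-step inequality
      have he : f (y (k+1)) ≤ (1 - γ (k+1)) * f (y k)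
          + γ (k+1) * (f (z k) + f' (z k) (x (k+1) - z k))
          + L/2 * (γ (k+1)^2 * ‖x (k+1) - x k‖^2) := by
        nlinarith [mul_le_mul_of_nonneg_left hgy h1γ, hym, hsm, hlin, hadd]
      have hmul2 := mul_le_mul_of_nonneg_left he hΘk1.le
      have heq2 : Θ (k+1) * ((1 - γ (k+1)) * f (y k)
          + γ (k+1) * (f (z k) + f' (z k) (x (k+1) - z k))
          + L/2 * (γ (k+1)^2 * ‖x (k+1) - x k‖^2))
          = Θ k * f (y k) + θ (k+1) * (f (z k) + f' (z k) (x (k+1) - z k))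
            + L/2 * (θ (k+1) * γ (k+1) * ‖x (k+1) - x k‖^2) := by
        rw [← hc1, ← hc2]; ring
      have hcmp : (∑ i ∈ Finset.Icc 1 k, θ i * (f (z (i-1)) + f' (z (i-1)) (x k - z (i-1))))
          ≤ ∑ i ∈ Finset.Icc 1 k, θ i * (f (z (i-1)) + f' (z (i-1)) (x (k+1) - z (i-1))) := by
        rw [hsumrep k (x k), hsumrep k (x (k+1))]
        exact add_le_add_right (hqmin k hk (x (k+1)) (hXmem (k+1))) _
      have hΦ : (∑ i ∈ Finset.Icc 1 k, θ i * (f (z (i-1)) + f' (z (i-1)) (x k - z (i-1))))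
          + θ (k+1) * (f (z k) + f' (z k) (x (k+1) - z k))
          ≤ ∑ i ∈ Finset.Icc 1 (k+1), θ i * (f (z (i-1)) + f' (z (i-1)) (x (k+1) - z (i-1))) := by
        rw [my_Icc_insert_top 1 k (by omega), Finset.sum_insert (by simp)]
        simp only [Nat.add_sub_cancel]
        linarith [hcmp]
      have hsum2 : ∑ i ∈ Finset.Icc 1 (k+1), θ i * γ i * ‖x i - x (i-1)‖^2
          = (∑ i ∈ Finset.Icc 1 k, θ i * γ i * ‖x i - x (i-1)‖^2)
            + θ (k+1) * γ (k+1) * ‖x (k+1) - x k‖^2 := by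
        rw [my_Icc_insert_top 1 k (by omega), Finset.sum_insert (by simp)]
        simp only [Nat.add_sub_cancel]
        ring
      rw [hsum2]
      rw [heq2] at hmul2
      linarith [ih, hΦ, hmul2]
  -- key convergence bound
  have key : ∀ k, 1 ≤ k → f (y k) - f xstar
      ≤ 2*L/((k:ℝ)*((k:ℝ)+1)) * ∑ i ∈ Finset.Icc 1 k, ‖x i - x (i-1)‖^2 := by
    intro k hk
    have hAk := hA k hk
    have hBk := hB k hk
    have hsum_le : ∑ i ∈ Finset.Icc 1 k, θ i * γ i * ‖x i - x (i-1)‖^2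
        ≤ 2 * θ 1 * ∑ i ∈ Finset.Icc 1 k, ‖x i - x (i-1)‖^2 := by
      rw [Finset.mul_sum]
      apply Finset.sum_le_sum
      intro i hi
      have hi1 := (Finset.mem_Icc.mp hi).1
      have hco : θ i * γ i ≤ 2 * θ 1 := by
        obtain ⟨j, rfl⟩ : ∃ j, i = j + 1 := ⟨i - 1, by omega⟩
        rw [hθformula (j+1) (by omega), hγval j]
        have hj2 : (0:ℝ) < (j:ℝ) + 2 := by positivity
        rw [← mul_div_assoc, div_le_iff₀ hj2]
        push_cast
        have hj0 : (0:ℝ) ≤ (j:ℝ) := Nat.cast_nonneg j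
        nlinarith [hθ1]
      exact mul_le_mul_of_nonneg_right hco (sq_nonneg _)
    have hΘk := hΘpos k hk
    have h4 : Θ k * (f (y k) - f xstar)
        ≤ L * θ 1 * ∑ i ∈ Finset.Icc 1 k, ‖x i - x (i-1)‖^2 := by
      have := mul_le_mul_of_nonneg_left hsum_le (by positivity : (0:ℝ) ≤ L/2)
      nlinarith [hAk, hBk]
    have h5 : f (y k) - f xstar
        ≤ (L * θ 1 * ∑ i ∈ Finset.Icc 1 k, ‖x i - x (i-1)‖^2) / Θ k := by
      rw [le_div_iff₀ hΘk]
      nlinarith [h4]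
    refine h5.trans (le_of_eq ?_)
    rw [hΘformula k hk]
    have hkR : (0:ℝ) < (k:ℝ) := by exact_mod_cast hk
    have hk1R : (0:ℝ) < (k:ℝ) + 1 := by positivity
    field_simp
  constructor
  · exact parti
  · intro ρ Q hρ hQ horacle k hk
    obtain ⟨hρ0, hρ1⟩ := hρ
    have hkR : (1:ℝ) ≤ (k:ℝ) := by exact_mod_cast hk
    have hkpos : (0:ℝ) < (k:ℝ) := by linarith
    set S : ℝ := (if ρ < 1 / 2 then (k : ℝ) ^ (1 - 2 * ρ) / (1 - 2 * ρ)
               else if ρ = 1 / 2 then Real.log ((k : ℝ) + 1)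
               else 1 / (2 * ρ - 1)) with hSdef
    have hS0 : 0 ≤ S := by
      rw [hSdef]
      split_ifs with h1 h2
      · exact div_nonneg (Real.rpow_nonneg hkpos.le _) (by linarith)
      · exact Real.log_nonneg (by linarith)
      · have h3 : 1/2 < ρ := lt_of_le_of_ne (by linarith [not_lt.mp h1]) (Ne.symm h2)
        apply div_nonneg zero_le_one
        linarith
    have hterm : ∀ i, 2 ≤ i →
        ‖x i - x (i-1)‖^2 ≤ 16 * Q^2 * G^(2*ρ) * ((i:ℝ)) ^ (-(2*ρ)) := by
      intro i hi
      have h1 := horacle i hi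
      have h2 := parti i hi
      have hγi : γ i = 2/((i:ℝ)+1) := hγ i
      have hiR : (1:ℝ) ≤ (i:ℝ) := by exact_mod_cast (by omega : 1 ≤ i)
      have hγipos : 0 < γ i := by rw [hγi]; positivity
      have hb0 : (0:ℝ) ≤ 2 * γ i * G := by positivity
      have h3 : ‖p i - p (i-1)‖ ^ ρ ≤ (2 * γ i * G) ^ ρ :=
        Real.rpow_le_rpow (norm_nonneg _) h2 hρ0.le
      have h4 : ‖x i - x (i-1)‖ ≤ Q * (2 * γ i * G) ^ ρ :=
        h1.trans (mul_le_mul_of_nonneg_left h3 hQ.le)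
      have h5 : ‖x i - x (i-1)‖^2 ≤ Q^2 * ((2 * γ i * G) ^ ρ)^2 := by
        have := pow_le_pow_left₀ (norm_nonneg _) h4 2
        calc ‖x i - x (i-1)‖^2 ≤ (Q * (2 * γ i * G) ^ ρ)^2 := this
          _ = Q^2 * ((2 * γ i * G) ^ ρ)^2 := by ring
      have h6 : ((2 * γ i * G) ^ ρ)^2 = (2 * γ i * G) ^ (2*ρ) := by
        rw [← Real.rpow_natCast ((2 * γ i * G) ^ ρ) 2, ← Real.rpow_mul hb0]
        congr 1
        push_cast
        ring
      have h7 : 2 * γ i * G = (4*G) * (((i:ℝ)+1)⁻¹) := by rw [hγi]; ring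
      have h8 : (2 * γ i * G) ^ (2*ρ) ≤ 16 * G^(2*ρ) * ((i:ℝ)) ^ (-(2*ρ)) := by
        rw [h7, Real.mul_rpow (by positivity) (by positivity)]
        have h9 : (((i:ℝ)+1)⁻¹) ^ (2*ρ) = ((i:ℝ)+1) ^ (-(2*ρ)) := by
          rw [Real.inv_rpow (by positivity), ← Real.rpow_neg (by positivity)]
        have h10 : (4*G:ℝ)^(2*ρ) = 4^(2*ρ) * G^(2*ρ) := Real.mul_rpow (by norm_num) hG0
        have h11 : (4:ℝ)^(2*ρ) ≤ 16 := by
          calc (4:ℝ)^(2*ρ) ≤ 4^(2:ℝ) :=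
                Real.rpow_le_rpow_of_exponent_le (by norm_num) (by linarith)
            _ = 16 := by
                rw [show (2:ℝ) = ((2:ℕ):ℝ) by norm_num, Real.rpow_natCast]; norm_num
        have h12 : ((i:ℝ)+1)^(-(2*ρ)) ≤ ((i:ℝ))^(-(2*ρ)) :=
          my_rpow_anti (by linarith) (by linarith) (by positivity)
        rw [h9, h10]
        have hGn : (0:ℝ) ≤ G^(2*ρ) := Real.rpow_nonneg hG0 _
        have hin : (0:ℝ) ≤ ((i:ℝ)+1)^(-(2*ρ)) := Real.rpow_nonneg (by linarith) _
        have hin2 : (0:ℝ) ≤ ((i:ℝ))^(-(2*ρ)) := Real.rpow_nonneg (by linarith) _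
        calc (4:ℝ)^(2*ρ) * G^(2*ρ) * ((i:ℝ)+1)^(-(2*ρ))
            ≤ 16 * G^(2*ρ) * ((i:ℝ)+1)^(-(2*ρ)) :=
              mul_le_mul_of_nonneg_right (mul_le_mul_of_nonneg_right h11 hGn) hin
          _ ≤ 16 * G^(2*ρ) * ((i:ℝ))^(-(2*ρ)) :=
              mul_le_mul_of_nonneg_left h12 (mul_nonneg (by norm_num) hGn)
      nlinarith [sq_nonneg Q, Real.rpow_nonneg hb0 (2*ρ)]
    have hsumd : ∑ i ∈ Finset.Icc 1 k, ‖x i - x (i-1)‖^2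
        ≤ DX^2 + 16*Q^2*G^(2*ρ) * (3*S) := by
      have hsplit : Finset.Icc 1 k = insert 1 (Finset.Icc 2 k) := by
        ext i; simp only [Finset.mem_Icc, Finset.mem_insert]; omega
      rw [hsplit, Finset.sum_insert (by simp)]
      have hd1 : ‖x 1 - x (1-1)‖^2 ≤ DX^2 := by
        have h := hdist (x 1) (hXmem 1) (x 0) hx0
        norm_num
        nlinarith [norm_nonneg (x 1 - x 0)]
      have h13 : ∑ i ∈ Finset.Icc 2 k, ‖x i - x (i-1)‖^2
          ≤ 16*Q^2*G^(2*ρ) * ∑ i ∈ Finset.Icc 2 k, ((i:ℝ)) ^ (-(2*ρ)) := by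
        rw [Finset.mul_sum]
        apply Finset.sum_le_sum
        intro i hi
        exact hterm i (Finset.mem_Icc.mp hi).1
      have h14 : ∑ i ∈ Finset.Icc 2 k, ((i:ℝ)) ^ (-(2*ρ))
          ≤ ∑ i ∈ Finset.Icc 1 k, ((i:ℝ)) ^ (-(2*ρ)) := by
        apply Finset.sum_le_sum_of_subset_of_nonneg
        · intro i hi
          simp only [Finset.mem_Icc] at *
          omega
        · intro i _ _
          exact Real.rpow_nonneg (Nat.cast_nonneg i) _
      have h15 := my_sum_bound ρ hρ0 hρ1 k hk
      rw [← hSdef] at h15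
      have h16 : (0:ℝ) ≤ 16*Q^2*G^(2*ρ) := by positivity
      nlinarith [mul_le_mul_of_nonneg_left (h14.trans h15) h16]
    have hkey := key k hk
    have hsum0 : (0:ℝ) ≤ ∑ i ∈ Finset.Icc 1 k, ‖x i - x (i-1)‖^2 := by positivity
    have hstep1 : 2*L/((k:ℝ)*((k:ℝ)+1)) * ∑ i ∈ Finset.Icc 1 k, ‖x i - x (i-1)‖^2
        ≤ 2*L/((k:ℝ)^2) * ∑ i ∈ Finset.Icc 1 k, ‖x i - x (i-1)‖^2 := by
      apply mul_le_mul_of_nonneg_right ?_ hsum0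
      apply div_le_div_of_nonneg_left (by positivity) (by positivity)
      nlinarith
    have hstep2 : 2*L/((k:ℝ)^2) * ∑ i ∈ Finset.Icc 1 k, ‖x i - x (i-1)‖^2
        ≤ 2*L/((k:ℝ)^2) * (DX^2 + 16*Q^2*G^(2*ρ) * (3*S)) :=
      mul_le_mul_of_nonneg_left hsumd (by positivity)
    have heq3 : 2*L/((k:ℝ)^2) * (DX^2 + 16*Q^2*G^(2*ρ) * (3*S))
        = 2*(L * DX^2/(k:ℝ)^2) + 96*(L * Q^2 * G^(2*ρ) * S/(k:ℝ)^2) := by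
      field_simp
      ring
    have hn1 : (0:ℝ) ≤ L * DX^2/(k:ℝ)^2 := by positivity
    have hn2 : (0:ℝ) ≤ L * Q^2 * G^(2*ρ) * S/(k:ℝ)^2 := by
      apply div_nonneg ?_ (by positivity)
      have := Real.rpow_nonneg hG0 (2*ρ)
      positivity
    linarith [hkey, hstep1, hstep2, heq3.le, heq3.ge]
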